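/- Let ρ ∈ (0, 1/2) and let G be a connected finite graph. Suppose v ∈ V(G) is such that the set H = H_{ρ,G}(v) of vertices eventually infected by {v} satisfies |H| ≥ 1/(2ρ) and H ≠ V(G). Then every connected component of G − H has more than 1/(2ρ) vertices. -/

import Mathlib

open Finset
open scoped Classical

variable {V : Type*}

/-- One step of the bootstrap percolation process in `G` with thresholds `φ`. -/
noncomputable def percStep [Fintype V] (G : SimpleGraph V) (φ : V → ℝ) (A : Finset V) :
    Finset V :=
  A ∪ Finset.univ.filter fun v => φ v ≤ ((A.filter fun u => G.Adj v u).card : ℝ)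

/-- `A` is a contagious set for `G` with respect to thresholds `φ`. -/
def Contagious [Fintype V] (G : SimpleGraph V) (φ : V → ℝ) (A : Finset V) : Prop :=
  ∃ k, (percStep G φ)^[k] A = Finset.univ

/-- The final infected set `H_{φ,G}(A)`. -/
noncomputable def percClosure [Fintype V] (G : SimpleGraph V) (φ : V → ℝ) (A : Finset V) :
    Finset V :=
  (percStep G φ)^[Fintype.card V] A

/-- `h_ρ(G)`: minimum size of a contagious set for ratio `ρ`. -/
noncomputable def minContagious [Fintype V] (G : SimpleGraph V) (ρ : ℝ) : ℕ :=
  sInf {k | ∃ A : Finset V, A.card = k ∧ Contagious G (fun v => ρ * (G.degree v : ℝ)) A}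

lemma aux_subset_percStep [Fintype V] (G : SimpleGraph V) (φ : V → ℝ) (A : Finset V) :
    A ⊆ percStep G φ A := Finset.subset_union_left

lemma aux_iterate_fixed_of_fixed (f : Finset V → Finset V) (A : Finset V) {m n : ℕ}
    (hmn : m ≤ n) (h : f (f^[m] A) = f^[m] A) : f^[n] A = f^[m] A := by
  induction n with
  | zero => simp_all [Nat.le_zero.mp hmn]
  | succ n ih =>
    rcases Nat.lt_or_ge m (n+1) with hlt | hge
    · have := ih (Nat.lt_succ_iff.mp hlt)
      rw [Function.iterate_succ_apply', this, h]
    · have : m = n + 1 := le_antisymm hmn hge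
      subst this; rfl

lemma aux_closure_fixed [Fintype V] (f : Finset V → Finset V)
    (hf : ∀ A, A ⊆ f A) (A : Finset V) :
    f (f^[Fintype.card V] A) = f^[Fintype.card V] A := by
  by_contra hfix
  -- no step up to `card V` is a fixed point
  have hne : ∀ m ≤ Fintype.card V, f (f^[m] A) ≠ f^[m] A := by
    intro m hm h
    exact hfix (by
      rw [show f (f^[Fintype.card V] A) = f^[Fintype.card V + 1] A from
        (Function.iterate_succ_apply' f _ A).symm,
        aux_iterate_fixed_of_fixed f A (le_trans hm (Nat.le_succ _)) h,
        aux_iterate_fixed_of_fixed f A hm h])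
  have hcard : ∀ m ≤ Fintype.card V + 1, m ≤ (f^[m] A).card := by
    intro m hm
    induction m with
    | zero => simp
    | succ m ih =>
      have h1 : m ≤ (f^[m] A).card := ih (le_trans (Nat.le_succ _) hm)
      have hss : f^[m] A ⊂ f (f^[m] A) :=
        (hf _).ssubset_of_ne (Ne.symm (hne m (Nat.lt_succ_iff.mp hm)))
      have h2 : (f^[m] A).card < (f^[m + 1] A).card := by
        rw [Function.iterate_succ_apply']; exact Finset.card_lt_card hss
      show m + 1 ≤ (f^[m + 1] A).card
      omega
  have := hcard (Fintype.card V + 1) le_rfl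
  have hle : (f^[Fintype.card V + 1] A).card ≤ Fintype.card V := Finset.card_le_univ _
  omega

/-- Along a walk from outside `H` into `H`, there is a boundary vertex outside `H`
adjacent to `H` and reachable from the start within the complement. -/
lemma aux_cross [Fintype V] (G : SimpleGraph V) (H : Finset V) :
    ∀ {a b : V}, G.Walk a b → ∀ (ha : a ∉ H), b ∈ H →
      ∃ (u : V) (hu : u ∉ H), (∃ w ∈ H, G.Adj u w) ∧
        (G.induce {x : V | x ∉ H}).Reachable ⟨a, ha⟩ ⟨u, hu⟩ := by
  intro a b p
  induction p with
  | nil => intro ha hb; exact absurd hb ha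
  | @cons a x b hadj q ih =>
    intro ha hb
    by_cases hx : x ∈ H
    · exact ⟨a, ha, ⟨x, hx, hadj⟩, SimpleGraph.Reachable.refl _⟩
    · obtain ⟨u, hu, hw, hr⟩ := ih hx hb
      have hadj' : (G.induce {x : V | x ∉ H}).Adj ⟨a, ha⟩ ⟨x, hx⟩ := hadj
      exact ⟨u, hu, hw, (hadj'.reachable).trans hr⟩

/-- Claim 1 computation: if `H = H_{ρ,G}(v)` satisfies `|H| ≥ 1/(2ρ)`
and `H ≠ V(G)`, then every connected component of `G - H` has more than `1/(2ρ)`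
vertices. -/
theorem components_of_complement_large [Fintype V] (G : SimpleGraph V) (ρ : ℝ)
    (hρ₀ : 0 < ρ) (hρ₁ : ρ < 1 / 2) (hG : G.Connected) (v : V)
    (hH : 1 / (2 * ρ) ≤ ((percClosure G (fun w => ρ * (G.degree w : ℝ)) {v}).card : ℝ))
    (hne : percClosure G (fun w => ρ * (G.degree w : ℝ)) {v} ≠ Finset.univ) :
    ∀ C : (G.induce {w : V | w ∉ percClosure G (fun w => ρ * (G.degree w : ℝ)) {v}}).ConnectedComponent,
      1 / (2 * ρ) < (Nat.card C.supp : ℝ) := by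
  set φ : V → ℝ := fun w => ρ * (G.degree w : ℝ) with hφ
  set H : Finset V := percClosure G φ {v} with hHdef
  -- H is a fixed point of percStep
  have hfix : percStep G φ H = H := aux_closure_fixed _ (aux_subset_percStep G φ) _
  -- H is nonempty
  have hHpos : (0 : ℝ) < 1 / (2 * ρ) := by positivity
  have hHne : H.Nonempty :=
    Finset.card_pos.mp (by exact_mod_cast hHpos.trans_le hH)
  obtain ⟨h0, hh0⟩ := hHne
  intro C
  by_contra hC
  push_neg at hC
  -- pick a representative of C
  obtain ⟨c, rfl⟩ := C.exists_rep
  obtain ⟨c, hc⟩ := c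
  -- walk from c to h0
  obtain ⟨p⟩ := hG.preconnected c h0
  obtain ⟨u, hu, ⟨w, hw, huw⟩, hr⟩ := aux_cross G H p hc hh0
  -- u is in the component C
  have husupp : (⟨u, hu⟩ : {x : V | x ∉ H}) ∈
      ((G.induce {x : V | x ∉ H}).connectedComponentMk ⟨c, hc⟩).supp := by
    rw [SimpleGraph.ConnectedComponent.mem_supp_iff]
    exact SimpleGraph.ConnectedComponent.eq.mpr hr.symm
  -- m = number of neighbours of u in H, at least 1
  set m : ℕ := (H.filter fun x => G.Adj u x).card with hm
  have hm1 : 1 ≤ m := Finset.card_pos.mpr ⟨w, Finset.mem_filter.mpr ⟨hw, huw⟩⟩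
  -- since u ∉ percStep H = H : m < ρ * deg u
  have hmlt : (m : ℝ) < ρ * (G.degree u : ℝ) := by
    by_contra hle
    push_neg at hle
    apply hu
    rw [← hfix]
    exact Finset.mem_union_right _ (Finset.mem_filter.mpr ⟨Finset.mem_univ _, hle⟩)
  -- k = number of neighbours of u outside H
  set S : Finset V := (G.neighborFinset u).filter (fun x => x ∉ H) with hS
  set k : ℕ := S.card with hk
  -- degree count
  have hdeg : G.degree u = m + k := by
    rw [← SimpleGraph.card_neighborFinset_eq_degree]
    rw [hm, hk, hS]
    rw [← Finset.card_filter_add_card_filter_not (p := fun x => x ∈ H)]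
    congr 1
    apply Finset.card_bij (fun x _ => x)
    · intro x hx
      simp only [Finset.mem_filter, SimpleGraph.mem_neighborFinset] at hx ⊢
      exact ⟨hx.2, hx.1⟩
    · intro x _ y _ h; exact h
    · intro x hx
      simp only [Finset.mem_filter, SimpleGraph.mem_neighborFinset] at hx ⊢
      exact ⟨x, ⟨hx.2, hx.1⟩, rfl⟩
  -- neighbours outside H inject into C.supp minus u
  set T : Finset {x : V | x ∉ H} :=
    (((G.induce {x : V | x ∉ H}).connectedComponentMk ⟨c, hc⟩).supp.toFinset.erase ⟨u, hu⟩)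
    with hT
  have hkle : k + 1 ≤ Nat.card
      (((G.induce {x : V | x ∉ H}).connectedComponentMk ⟨c, hc⟩).supp) := by
    have hinj : k ≤ T.card := by
      apply Finset.card_le_card_of_injOn
        (fun x => if hx : x ∉ H then (⟨x, hx⟩ : {x : V | x ∉ H}) else ⟨u, hu⟩)
      · intro x hx
        simp only [hS, Finset.mem_coe, Finset.mem_filter, SimpleGraph.mem_neighborFinset] at hx
        obtain ⟨hadj, hxH⟩ := hx
        simp only [Finset.mem_coe]
        rw [dif_pos hxH]
        rw [hT, Finset.mem_erase]
        constructor
        · intro h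
          exact (G.ne_of_adj hadj).symm (congrArg Subtype.val h)
        · rw [Set.mem_toFinset, SimpleGraph.ConnectedComponent.mem_supp_iff]
          have hadj' : (G.induce {y : V | y ∉ H}).Adj ⟨x, hxH⟩ ⟨u, hu⟩ := hadj.symm
          rw [SimpleGraph.ConnectedComponent.eq]
          exact hadj'.reachable.trans hr.symm
      · intro x hx y hy hxy
        simp only [hS, Finset.mem_coe, Finset.mem_filter] at hx hy
        simp only [dif_pos hx.2, dif_pos hy.2] at hxy
        exact congrArg Subtype.val hxy
    have hTcard : T.card + 1 =
        (((G.induce {x : V | x ∉ H}).connectedComponentMk ⟨c, hc⟩).supp).toFinset.card := by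
      rw [hT, Finset.card_erase_of_mem (Set.mem_toFinset.mpr husupp)]
      have : 1 ≤ (((G.induce {x : V | x ∉ H}).connectedComponentMk ⟨c, hc⟩).supp).toFinset.card :=
        Finset.card_pos.mpr ⟨_, Set.mem_toFinset.mpr husupp⟩
      omega
    rw [Nat.card_eq_fintype_card, ← Set.toFinset_card]
    omega
  -- the contradiction
  have hkr : (k : ℝ) + 1 ≤ 1 / (2 * ρ) := by
    calc (k : ℝ) + 1 = ((k + 1 : ℕ) : ℝ) := by push_cast; ring
    _ ≤ (Nat.card (((G.induce {x : V | x ∉ H}).connectedComponentMk ⟨c, hc⟩).supp) : ℝ) := by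
        exact_mod_cast hkle
    _ ≤ 1 / (2 * ρ) := hC
  have hdegr : (G.degree u : ℝ) = (m : ℝ) + k := by rw [hdeg]; push_cast; ring
  rw [hdegr] at hmlt
  -- m < ρ(m+k), k ≤ 1/(2ρ) - 1, m ≥ 1, ρ < 1/2
  have h1 : ρ * ((m : ℝ) + k) ≤ ρ * m + ρ * (1 / (2 * ρ) - 1) := by
    have : (k : ℝ) ≤ 1 / (2 * ρ) - 1 := by linarith
    nlinarith
  have h2 : ρ * (1 / (2 * ρ)) = 1 / 2 := by
    rw [mul_one_div, div_eq_div_iff (by linarith) (by norm_num)]; ring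
  have hm1' : (1 : ℝ) ≤ (m : ℝ) := by exact_mod_cast hm1
  nlinarith
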